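/- For every integer k > 3 there exists a constant C_k such that for every integer n > C_k there exists an n×(kn) complex matrix with (ℓ₁,t)-recoverability for every positive integer t ≤ √n/4. -/

import Mathlib

open scoped BigOperators

noncomputable def welch (n N : ℕ) : ℝ :=
  Real.sqrt (((N : ℝ) - n) / (((N : ℝ) - 1) * n))

/-- Normalised absolute inner product of columns `i` and `j` of `Φ`. -/
noncomputable def colCoh {m ι : Type*} [Fintype m] (Φ : Matrix m ι ℂ) (i j : ι) : ℝ :=
  ‖∑ r, (starRingEnd ℂ) (Φ r i) * Φ r j‖ /
    (Real.sqrt (∑ r, ‖Φ r i‖ ^ 2) * Real.sqrt (∑ r, ‖Φ r j‖ ^ 2))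

/-- `(ℓ₁,t)`-recoverability: every `t`-sparse `x` is the unique `ℓ₁`-minimizer among
solutions `z` of `Φ z = Φ x`. -/
def Recoverable {m ι : Type*} [Fintype m] [Fintype ι] [DecidableEq ι]
    (Φ : Matrix m ι ℂ) (t : ℕ) : Prop :=
  ∀ x : ι → ℂ, (Finset.univ.filter (fun i => x i ≠ 0)).card ≤ t →
    ∀ z : ι → ℂ, Φ.mulVec z = Φ.mulVec x → z ≠ x →
      ∑ i, ‖x i‖ < ∑ i, ‖z i‖

noncomputable def psiC (p : ℕ) (t : ZMod p) : ℂ :=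
  Complex.exp (2 * Real.pi * Complex.I * (ZMod.val t) / p)

lemma psiC_zero (p : ℕ) [NeZero p] : psiC p 0 = 1 := by
  simp [psiC, ZMod.val_zero]

lemma psiC_add (p : ℕ) [NeZero p] (s t : ZMod p) :
    psiC p (s + t) = psiC p s * psiC p t := by
  have hp : (p : ℂ) ≠ 0 := by exact_mod_cast (NeZero.ne p)
  rw [psiC, psiC, psiC, ← Complex.exp_add]
  set m := ((ZMod.val s + ZMod.val t) / p : ℕ) with hm
  have h : (ZMod.val s + ZMod.val t : ℕ) = ZMod.val (s + t) + p * m := by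
    rw [ZMod.val_add]; exact (Nat.mod_add_div _ _).symm
  have hc : (ZMod.val s : ℂ) + ZMod.val t = ZMod.val (s + t) + p * m := by
    exact_mod_cast h
  have key : 2 * (Real.pi : ℂ) * Complex.I * (ZMod.val s) / p
        + 2 * (Real.pi : ℂ) * Complex.I * (ZMod.val t) / p
      = 2 * (Real.pi : ℂ) * Complex.I * (ZMod.val (s + t)) / p
        + (m : ℂ) * (2 * (Real.pi : ℂ) * Complex.I) := by
    rw [← add_div]
    have h3 : 2 * (Real.pi : ℂ) * Complex.I * (ZMod.val s)
          + 2 * (Real.pi : ℂ) * Complex.I * (ZMod.val t)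
        = 2 * (Real.pi : ℂ) * Complex.I * (ZMod.val (s + t))
          + ((m : ℂ) * (2 * (Real.pi : ℂ) * Complex.I)) * p := by
      linear_combination (2 * (Real.pi : ℂ) * Complex.I) * hc
    rw [h3, add_div, mul_div_cancel_right₀ _ hp]
  rw [key, Complex.exp_add, Complex.exp_nat_mul_two_pi_mul_I, mul_one]

lemma psiC_norm (p : ℕ) (t : ZMod p) : ‖psiC p t‖ = 1 := by
  rw [psiC, Complex.norm_exp]
  have : (2 * (Real.pi : ℂ) * Complex.I * (ZMod.val t) / p).re = 0 := by
    simp [Complex.div_re, Complex.mul_re, Complex.mul_im]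
  rw [this, Real.exp_zero]

lemma psiC_conj (p : ℕ) [NeZero p] (t : ZMod p) :
    (starRingEnd ℂ) (psiC p t) = psiC p (-t) := by
  have h1 : psiC p t * psiC p (-t) = 1 := by
    rw [← psiC_add, add_neg_cancel, psiC_zero]
  have h2 : (starRingEnd ℂ) (psiC p t) * psiC p t = 1 := by
    rw [mul_comm, Complex.mul_conj]
    norm_cast
    rw [Complex.normSq_eq_norm_sq, psiC_norm]; norm_num
  have hne : psiC p t ≠ 0 := by
    intro h; rw [h, mul_zero] at h2; exact one_ne_zero h2.symm
  rw [← h1, mul_comm (psiC p t)] at h2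
  exact mul_right_cancel₀ hne h2

lemma psiC_ne_one (p : ℕ) [NeZero p] (c : ZMod p) (hc : c ≠ 0) : psiC p c ≠ 1 := by
  intro h
  rw [psiC, Complex.exp_eq_one_iff] at h
  obtain ⟨n, hn⟩ := h
  have h2pi : (2 * (Real.pi : ℂ) * Complex.I) ≠ 0 := by
    simp [Real.pi_ne_zero, Complex.I_ne_zero]
  have hp : (p : ℂ) ≠ 0 := by exact_mod_cast (NeZero.ne p)
  set v : ℂ := (ZMod.val c : ℂ) with hvdef
  have hn2 : 2 * (Real.pi : ℂ) * Complex.I * v = (n : ℂ) * (2 * Real.pi * Complex.I) * p := by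
    field_simp at hn; linear_combination (2 * (Real.pi : ℂ) * Complex.I) * hn
  have hv : v = (n : ℂ) * p := by
    have : 2 * (Real.pi : ℂ) * Complex.I * v = 2 * Real.pi * Complex.I * ((n:ℂ) * p) := by
      linear_combination hn2
    exact mul_left_cancel₀ h2pi this
  have hvr : ((ZMod.val c : ℝ)) = (n : ℝ) * p := by
    rw [hvdef] at hv; exact_mod_cast hv
  have hv0 : 0 < ZMod.val c := Nat.pos_of_ne_zero (fun h0 => hc (by
    rwa [ZMod.val_eq_zero] at h0))
  have hvp : ZMod.val c < p := ZMod.val_lt c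
  have hppos : (0:ℝ) < p := by exact_mod_cast Nat.pos_of_ne_zero (NeZero.ne p)
  rcases le_or_gt 1 n with h1 | h1
  · have h1r : (1:ℝ) ≤ (n:ℝ) := by exact_mod_cast h1
    have : (p:ℝ) ≤ ZMod.val c := by rw [hvr]; nlinarith
    exact absurd (by exact_mod_cast this) (not_le.mpr hvp)
  · have hn0 : (n:ℝ) ≤ 0 := by exact_mod_cast Int.lt_add_one_iff.mp h1
    have h0 : (ZMod.val c : ℝ) ≤ 0 := by rw [hvr]; nlinarith
    have : ZMod.val c = 0 := by exact_mod_cast le_antisymm h0 (by positivity)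
    omega

lemma sum_psiC_lin (p : ℕ) [NeZero p] (c : ZMod p) (hc : c ≠ 0) :
    ∑ x : ZMod p, psiC p (c * x) = 0 := by
  have h1 : ∑ x : ZMod p, psiC p (c * (x + 1)) = ∑ x : ZMod p, psiC p (c * x) :=
    Fintype.sum_equiv (Equiv.addRight (1 : ZMod p)) _ _ (fun x => rfl)
  have h2 : ∀ x : ZMod p, psiC p (c * (x + 1)) = psiC p c * psiC p (c * x) := by
    intro x
    rw [mul_add, mul_one, add_comm, psiC_add]
  rw [Finset.sum_congr rfl (fun x _ => h2 x), ← Finset.mul_sum] at h1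
  by_contra hS
  exact psiC_ne_one p c hc (mul_right_cancel₀ hS (by rw [h1, one_mul]))

lemma two_ne_zero_zmod (p : ℕ) [Fact (Nat.Prime p)] (hodd : p ≠ 2) :
    (2 : ZMod p) ≠ 0 := by
  intro h
  have h2 : ((2:ℕ) : ZMod p) = 0 := by exact_mod_cast h
  have hdvd : p ∣ 2 := (ZMod.natCast_eq_zero_iff 2 p).mp h2
  have hp := (Fact.out : Nat.Prime p).two_le
  rcases (Nat.Prime.eq_one_or_self_of_dvd Nat.prime_two p hdvd) with h | h <;> omega

lemma sum_psiC_quad (p : ℕ) [Fact (Nat.Prime p)] (hodd : p ≠ 2) (d e : ZMod p)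
    (hd : d ≠ 0) :
    ‖∑ x : ZMod p, psiC p (d * x ^ 2 + e * x)‖ = Real.sqrt p := by
  haveI : NeZero p := ⟨(Fact.out : Nat.Prime p).ne_zero⟩
  set f : ZMod p → ZMod p := fun x => d * x ^ 2 + e * x with hf
  set S := ∑ x : ZMod p, psiC p (f x) with hS
  have inner : ∀ y : ZMod p,
      (∑ x : ZMod p, psiC p (f x)) * (starRingEnd ℂ) (psiC p (f y))
        = ∑ u : ZMod p, psiC p (f (y + u) - f y) := by
    intro y
    rw [psiC_conj, Finset.sum_mul]
    exact (Fintype.sum_equiv (Equiv.addLeft y)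
      (fun u : ZMod p => psiC p (f (y + u) - f y))
      (fun x : ZMod p => psiC p (f x) * psiC p (-(f y)))
      (fun u => by
        show psiC p (f (y + u) - f y) = psiC p (f (y + u)) * psiC p (-(f y))
        rw [sub_eq_add_neg, psiC_add])).symm
  have key : S * (starRingEnd ℂ) S = (p : ℂ) := by
    rw [hS, map_sum, Finset.mul_sum]
    rw [Finset.sum_congr rfl (fun y _ => inner y)]
    rw [Finset.sum_comm]
    have hfe : ∀ y u : ZMod p, f (y + u) - f y = (d * u ^ 2 + e * u) + (2 * d * u) * y := by
      intro y u; simp only [hf]; ring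
    have step : ∀ u : ZMod p, ∑ y : ZMod p, psiC p (f (y + u) - f y)
        = psiC p (d * u ^ 2 + e * u) * ∑ y : ZMod p, psiC p ((2 * d * u) * y) := by
      intro u
      rw [Finset.mul_sum]
      exact Finset.sum_congr rfl fun y _ => by rw [hfe, psiC_add]
    rw [Finset.sum_congr rfl (fun u _ => step u)]
    rw [Finset.sum_eq_single (0 : ZMod p)]
    · have h1 : d * (0 : ZMod p) ^ 2 + e * 0 = 0 := by ring
      have h2 : ∀ y : ZMod p, 2 * d * (0 : ZMod p) * y = 0 := fun y => by ring
      rw [h1, psiC_zero, one_mul,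
        Finset.sum_congr rfl (fun y _ => by rw [h2, psiC_zero]),
        Finset.sum_const, Finset.card_univ, ZMod.card]
      simp
    · intro u _ hu
      have h2du : (2 * d * u) ≠ 0 :=
        mul_ne_zero (mul_ne_zero (two_ne_zero_zmod p hodd) hd) hu
      rw [sum_psiC_lin p _ h2du, mul_zero]
    · intro h; exact absurd (Finset.mem_univ 0) h
  have hns : Complex.normSq S = (p : ℝ) := by
    have : (Complex.normSq S : ℂ) = (p : ℂ) := by rw [← Complex.mul_conj]; exact key
    exact_mod_cast this
  show ‖S‖ = Real.sqrt p
  rw [Complex.norm_def, hns]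

lemma sum_if_lt (p n : ℕ) [NeZero p] (hpn : p ≤ n) (F : ZMod p → ℂ) :
    ∑ r : Fin n, (if (r : ℕ) < p then F ((r : ℕ) : ZMod p) else 0)
      = ∑ x : ZMod p, F x := by
  rw [← Finset.sum_filter]
  refine Finset.sum_nbij' (fun r => ((r : ℕ) : ZMod p))
    (fun x => (⟨ZMod.val x, lt_of_lt_of_le (ZMod.val_lt x) hpn⟩ : Fin n))
    ?_ ?_ ?_ ?_ ?_
  · intro r _; exact Finset.mem_univ _
  · intro x _
    simp only [Finset.mem_filter, Finset.mem_univ, true_and]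
    exact ZMod.val_lt x
  · intro r hr
    have hrp : (r : ℕ) < p := (Finset.mem_filter.mp hr).2
    apply Fin.ext
    simp [ZMod.val_cast_of_lt hrp]
  · intro x _
    simp [ZMod.natCast_val, ZMod.cast_id]
  · intro r hr
    rfl

lemma exists_good_matrix (p n N : ℕ) [Fact (Nat.Prime p)] (hp2 : p ≠ 2)
    (hpn : p ≤ n) (hN : N ≤ p * p) :
    ∃ Φ : Matrix (Fin n) (Fin N) ℂ,
      (∀ i, ∑ r, (starRingEnd ℂ) (Φ r i) * Φ r i = 1) ∧
      (∀ i j, i ≠ j → ‖∑ r, (starRingEnd ℂ) (Φ r i) * Φ r j‖ ≤ (Real.sqrt p)⁻¹) := by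
  haveI : NeZero p := ⟨(Fact.out : Nat.Prime p).ne_zero⟩
  have hppos : 0 < p := (Fact.out : Nat.Prime p).pos
  have hpR : (0 : ℝ) < p := by exact_mod_cast hppos
  set q : Fin N → Fin p × Fin p := fun j => finProdFinEquiv.symm (Fin.castLE hN j) with hq
  set a : Fin N → ZMod p := fun j => (((q j).1 : ℕ) : ZMod p) with ha
  set b : Fin N → ZMod p := fun j => (((q j).2 : ℕ) : ZMod p) with hb
  have hinj : ∀ i j : Fin N, a i = a j → b i = b j → i = j := by
    intro i j hai hbi
    have h1 : (q i).1 = (q j).1 := by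
      apply Fin.ext
      have := congrArg ZMod.val hai
      rwa [ha, ZMod.val_cast_of_lt (q i).1.isLt, ZMod.val_cast_of_lt (q j).1.isLt] at this
    have h2 : (q i).2 = (q j).2 := by
      apply Fin.ext
      have := congrArg ZMod.val hbi
      rwa [hb, ZMod.val_cast_of_lt (q i).2.isLt, ZMod.val_cast_of_lt (q j).2.isLt] at this
    have hqq : q i = q j := Prod.ext h1 h2
    have := finProdFinEquiv.symm.injective hqq
    exact Fin.castLE_injective hN this
  set Φ : Matrix (Fin n) (Fin N) ℂ := fun r j =>
    if (r : ℕ) < p then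
      (((Real.sqrt p)⁻¹ : ℝ) : ℂ) *
        psiC p (a j * ((r : ℕ) : ZMod p) ^ 2 + b j * ((r : ℕ) : ZMod p))
    else 0 with hΦ
  have hentry : ∀ (i j : Fin N) (r : Fin n),
      (starRingEnd ℂ) (Φ r i) * Φ r j
        = if (r : ℕ) < p then
            Complex.ofReal ((p : ℝ)⁻¹) *
              psiC p ((a j - a i) * ((r : ℕ) : ZMod p) ^ 2 + (b j - b i) * ((r : ℕ) : ZMod p))
          else 0 := by
    intro i j r
    by_cases hr : (r : ℕ) < p
    · simp only [hΦ, if_pos hr]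
      set x : ZMod p := ((r : ℕ) : ZMod p)
      rw [map_mul, Complex.conj_ofReal, psiC_conj]
      have harith : psiC p (-(a i * x ^ 2 + b i * x)) * psiC p (a j * x ^ 2 + b j * x)
          = psiC p ((a j - a i) * x ^ 2 + (b j - b i) * x) := by
        rw [← psiC_add]
        congr 1
        ring
      have hsqrt : ((Real.sqrt p)⁻¹ : ℝ) * ((Real.sqrt p)⁻¹ : ℝ) = ((p : ℝ))⁻¹ := by
        rw [← mul_inv, Real.mul_self_sqrt (le_of_lt hpR)]
      calc (((Real.sqrt p)⁻¹ : ℝ) : ℂ) * psiC p (-(a i * x ^ 2 + b i * x))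
            * ((((Real.sqrt p)⁻¹ : ℝ) : ℂ) * psiC p (a j * x ^ 2 + b j * x))
          = ((((Real.sqrt p)⁻¹ : ℝ) : ℂ) * (((Real.sqrt p)⁻¹ : ℝ) : ℂ))
            * (psiC p (-(a i * x ^ 2 + b i * x)) * psiC p (a j * x ^ 2 + b j * x)) := by ring
        _ = Complex.ofReal ((p : ℝ)⁻¹) * psiC p ((a j - a i) * x ^ 2 + (b j - b i) * x) := by
            rw [harith, ← Complex.ofReal_mul, hsqrt]
    · simp only [hΦ, if_neg hr, map_zero, zero_mul]
  have hgram : ∀ i j : Fin N,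
      ∑ r, (starRingEnd ℂ) (Φ r i) * Φ r j
        = Complex.ofReal ((p : ℝ)⁻¹) * ∑ x : ZMod p, psiC p ((a j - a i) * x ^ 2 + (b j - b i) * x) := by
    intro i j
    rw [Finset.sum_congr rfl (fun r _ => hentry i j r)]
    rw [sum_if_lt p n hpn
      (fun x => Complex.ofReal ((p : ℝ)⁻¹) * psiC p ((a j - a i) * x ^ 2 + (b j - b i) * x))]
    rw [← Finset.mul_sum]
  refine ⟨Φ, ?_, ?_⟩
  · intro i
    rw [hgram i i]
    have hz : ∀ x : ZMod p, (a i - a i) * x ^ 2 + (b i - b i) * x = 0 := fun x => by ring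
    rw [Finset.sum_congr rfl (fun x _ => by rw [hz x, psiC_zero]),
      Finset.sum_const, Finset.card_univ, ZMod.card, nsmul_eq_mul, mul_one]
    have hpc : (p : ℂ) ≠ 0 := by exact_mod_cast hppos.ne'
    push_cast
    field_simp
  · intro i j hij
    rw [hgram i j, norm_mul]
    have hnr : ‖Complex.ofReal ((p : ℝ)⁻¹)‖ = (p : ℝ)⁻¹ := by
      rw [Complex.norm_real]
      exact abs_of_nonneg (by positivity)
    rw [hnr]
    by_cases hd : a j - a i = 0
    · have hbne : b j - b i ≠ 0 := by
        intro hb0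
        exact hij (hinj i j (sub_eq_zero.mp hd).symm (sub_eq_zero.mp hb0).symm)
      have hlin : ∀ x : ZMod p, (a j - a i) * x ^ 2 + (b j - b i) * x = (b j - b i) * x := by
        intro x; rw [hd]; ring
      rw [Finset.sum_congr rfl (fun x _ => by rw [hlin x]), sum_psiC_lin p _ hbne]
      simp [Real.sqrt_nonneg]
    · rw [sum_psiC_quad p hp2 _ _ hd]
      have hsp : (0:ℝ) < Real.sqrt p := Real.sqrt_pos.mpr hpR
      have heq : (p : ℝ)⁻¹ * Real.sqrt p = (Real.sqrt p)⁻¹ := by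
        rw [← Real.mul_self_sqrt (le_of_lt hpR)]
        field_simp
        rw [Real.sqrt_sq hsp.le]
      exact le_of_eq heq

lemma recoverable_of_coherence {n : ℕ} {ι : Type*} [Fintype ι] [DecidableEq ι]
    (Φ : Matrix (Fin n) ι ℂ) (μ : ℝ) (hμ0 : 0 ≤ μ)
    (hdiag : ∀ i, (∑ r, (starRingEnd ℂ) (Φ r i) * Φ r i) = 1)
    (hoff : ∀ i j, i ≠ j → ‖∑ r, (starRingEnd ℂ) (Φ r i) * Φ r j‖ ≤ μ)
    (t : ℕ) (ht : ((2 * t : ℝ) - 1) * μ < 1) :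
    Recoverable Φ t := by
  intro x hx z hz hne
  set h : ι → ℂ := fun i => z i - x i with hhdef
  set g : ι → ι → ℂ := fun i j => ∑ r, (starRingEnd ℂ) (Φ r i) * Φ r j with hgdef
  have hker : ∀ r : Fin n, ∑ j, Φ r j * h j = 0 := by
    intro r
    have := congrFun hz r
    simp only [Matrix.mulVec, dotProduct] at this
    simp only [hhdef, mul_sub, Finset.sum_sub_distrib, this, sub_self]
  have key1 : ∀ i, h i = -∑ j ∈ Finset.univ.erase i, g i j * h j := by
    intro i
    have e1 : ∑ j, g i j * h j = 0 := by
      have swap : ∑ j, g i j * h j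
          = ∑ r, (starRingEnd ℂ) (Φ r i) * ∑ j, Φ r j * h j := by
        simp only [hgdef, Finset.sum_mul, Finset.mul_sum]
        rw [Finset.sum_comm]
        exact Finset.sum_congr rfl fun r _ => Finset.sum_congr rfl fun j _ => by ring
      rw [swap]
      simp [hker]
    have e2 : g i i * h i + ∑ j ∈ Finset.univ.erase i, g i j * h j = 0 := by
      rw [Finset.add_sum_erase Finset.univ (fun j => g i j * h j) (Finset.mem_univ i)]
      exact e1
    have e3 : g i i = 1 := hdiag i
    rw [e3, one_mul] at e2
    exact eq_neg_of_add_eq_zero_left e2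
  set H : ℝ := ∑ j, ‖h j‖ with hHdef
  have key2 : ∀ i, ‖h i‖ + μ * ‖h i‖ ≤ μ * H := by
    intro i
    have b1 : ‖h i‖ ≤ ∑ j ∈ Finset.univ.erase i, μ * ‖h j‖ := by
      rw [key1 i, norm_neg]
      refine (norm_sum_le _ _).trans (Finset.sum_le_sum fun j hj => ?_)
      rw [norm_mul]
      exact mul_le_mul_of_nonneg_right
        (hoff i j (fun hij => (Finset.mem_erase.mp hj).1 hij.symm)) (norm_nonneg _)
    have b2 : ∑ j ∈ Finset.univ.erase i, μ * ‖h j‖ = μ * (H - ‖h i‖) := by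
      rw [← Finset.mul_sum]
      congr 1
      have := Finset.add_sum_erase Finset.univ (fun j => ‖h j‖) (Finset.mem_univ i)
      rw [hHdef]
      linarith [this]
    nlinarith [b1, b2]
  have hH0 : 0 < H := by
    have hne' : ∃ i, h i ≠ 0 := by
      by_contra hc
      push_neg at hc
      exact hne (funext fun i => by
        have := hc i
        simpa [hhdef, sub_eq_zero] using this)
    obtain ⟨i0, hi0⟩ := hne'
    have : 0 < ‖h i0‖ := norm_pos_iff.mpr hi0
    exact Finset.sum_pos' (fun j _ => norm_nonneg _) ⟨i0, Finset.mem_univ i0, this⟩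
  set S : Finset ι := Finset.univ.filter (fun i => x i ≠ 0) with hSdef
  -- bound on ∑_{i ∈ S} ‖h i‖
  set A : ℝ := ∑ i ∈ S, ‖h i‖ with hAdef
  have hA0 : 0 ≤ A := Finset.sum_nonneg fun i _ => norm_nonneg _
  have hAbound : (1 + μ) * A ≤ (t : ℝ) * (μ * H) := by
    have step : ∑ i ∈ S, (‖h i‖ + μ * ‖h i‖) ≤ ∑ i ∈ S, μ * H :=
      Finset.sum_le_sum fun i _ => key2 i
    rw [Finset.sum_const, nsmul_eq_mul] at step
    have hcard : (S.card : ℝ) ≤ (t : ℝ) := by exact_mod_cast hx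
    have : (S.card : ℝ) * (μ * H) ≤ (t : ℝ) * (μ * H) :=
      mul_le_mul_of_nonneg_right hcard (by positivity)
    calc (1 + μ) * A = ∑ i ∈ S, (‖h i‖ + μ * ‖h i‖) := by
          rw [hAdef, Finset.mul_sum]; exact Finset.sum_congr rfl fun i _ => by ring
      _ ≤ (S.card : ℝ) * (μ * H) := step
      _ ≤ (t : ℝ) * (μ * H) := this
  have hkey3 : 2 * A < H := by nlinarith [hAbound, hH0, hμ0, hA0, ht]
  -- now the ℓ¹ comparison
  have hsplitz : ∑ i, ‖z i‖ = ∑ i ∈ S, ‖z i‖ + ∑ i ∈ Finset.univ.filter (fun i => ¬ x i ≠ 0), ‖z i‖ :=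
    (Finset.sum_filter_add_sum_filter_not Finset.univ _ _).symm
  have hsplith : H = ∑ i ∈ S, ‖h i‖ + ∑ i ∈ Finset.univ.filter (fun i => ¬ x i ≠ 0), ‖h i‖ :=
    (Finset.sum_filter_add_sum_filter_not Finset.univ _ _).symm
  have hxsum : ∑ i, ‖x i‖ = ∑ i ∈ S, ‖x i‖ := by
    rw [hSdef]
    refine (Finset.sum_filter_of_ne fun i _ hne0 => ?_).symm
    intro hxi
    rw [hxi, norm_zero] at hne0
    exact hne0 rfl
  have hzc : ∀ i ∈ Finset.univ.filter (fun i => ¬ x i ≠ 0), ‖z i‖ = ‖h i‖ := by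
    intro i hi
    have hxi : x i = 0 := by simpa using (Finset.mem_filter.mp hi).2
    simp [hhdef, hxi]
  have hzS : ∀ i ∈ S, ‖x i‖ - ‖h i‖ ≤ ‖z i‖ := by
    intro i _
    have hxeq : x i = z i - h i := by simp [hhdef]
    have hb := norm_sub_le (z i) (h i)
    rw [← hxeq] at hb
    linarith
  have h1 : ∑ i ∈ S, ‖x i‖ - ∑ i ∈ S, ‖h i‖ ≤ ∑ i ∈ S, ‖z i‖ := by
    have := Finset.sum_le_sum hzS
    rw [Finset.sum_sub_distrib] at this
    exact this
  have h2 : ∑ i ∈ Finset.univ.filter (fun i => ¬ x i ≠ 0), ‖z i‖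
      = ∑ i ∈ Finset.univ.filter (fun i => ¬ x i ≠ 0), ‖h i‖ :=
    Finset.sum_congr rfl hzc
  rw [hsplitz, h2, hxsum]
  have hA : ∑ i ∈ S, ‖h i‖ = A := hAdef.symm
  linarith [hsplith, h1, hkey3]

/-- For every integer `k > 3` there is a constant `C_k` such that for every
`n > C_k` there exists an `n × kn` complex matrix with `(ℓ₁,t)`-recoverability for
every positive integer `t ≤ √n/4`. -/
theorem stmt_14 (k : ℕ) (hk : 3 < k) :
    ∃ C : ℕ, ∀ n : ℕ, C < n →
      ∃ Φ : Matrix (Fin n) (Fin (k * n)) ℂ,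
        ∀ t : ℕ, 0 < t → (t : ℝ) ≤ Real.sqrt n / 4 → Recoverable Φ t := by
  refine ⟨4 * k + 2, fun n hn => ?_⟩
  have hn19 : 19 ≤ n := by omega
  obtain ⟨p, hp, hlow, hhigh⟩ := Nat.exists_prime_lt_and_le_two_mul (n / 2) (by omega)
  haveI : Fact (Nat.Prime p) := ⟨hp⟩
  have hp2 : p ≠ 2 := by omega
  have hpn : p ≤ n := by omega
  have hcols : k * n ≤ p * p := by
    have h2p : n + 1 ≤ 2 * p := by omega
    have hn' : 4 * k + 3 ≤ n := by omega
    nlinarith [h2p, hn']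
  obtain ⟨Φ, hdiag, hoff⟩ := exists_good_matrix p n (k * n) hp2 hpn hcols
  refine ⟨Φ, fun t ht htb => ?_⟩
  apply recoverable_of_coherence Φ ((Real.sqrt p)⁻¹) (by positivity) hdiag hoff
  have hsp : (0:ℝ) < Real.sqrt p := Real.sqrt_pos.mpr (by exact_mod_cast hp.pos)
  have hsn : (0:ℝ) < Real.sqrt n := Real.sqrt_pos.mpr (by positivity)
  have h2tp : (2 * (t:ℝ)) - 1 < Real.sqrt p := by
    have h4t : (4 * (t:ℝ)) ≤ Real.sqrt n := by linarith [htb]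
    have e1 : Real.sqrt 2 * Real.sqrt n = Real.sqrt (2 * n) := (Real.sqrt_mul (by norm_num) n).symm
    have e2 : (2:ℝ) * Real.sqrt p = Real.sqrt (4 * p) := by
      rw [show (4:ℝ) * p = (2:ℝ)^2 * p by ring, Real.sqrt_mul (by positivity),
        Real.sqrt_sq (by norm_num)]
    have e3 : Real.sqrt (2 * n) ≤ Real.sqrt (4 * p) := by
      apply Real.sqrt_le_sqrt
      have hnat : 2 * n + 2 ≤ 4 * p := by omega
      have : ((2 * n + 2 : ℕ) : ℝ) ≤ ((4 * p : ℕ) : ℝ) := by exact_mod_cast hnat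
      push_cast at this
      linarith
    have hs2 : (1:ℝ) < Real.sqrt 2 := by
      nlinarith [Real.sq_sqrt (show (0:ℝ) ≤ 2 by norm_num), Real.sqrt_nonneg 2]
    have key : Real.sqrt n < 2 * Real.sqrt p := by
      have h5 : Real.sqrt n < Real.sqrt 2 * Real.sqrt n := by nlinarith
      rw [e1] at h5
      rw [e2]
      linarith
    linarith
  have hfin : ((2 * (t:ℝ)) - 1) * (Real.sqrt p)⁻¹ < 1 := by
    rw [← div_eq_mul_inv, div_lt_one hsp]
    exact h2tp
  convert hfin using 2
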